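/- Let Ω^{ij} be an invertible antisymmetric 4×4 complex matrix (a symplectic form on ℂ⁴). Consider the space of tensors T_{ij,kl} on ℂ⁴ satisfying: antisymmetry in (i,j), antisymmetry in (k,l), the cyclic identity T_{ij,kl} + T_{jk,il} + T_{ki,jl} = 0, and the tracelessness conditions Ω^{ij}T_{ij,kl} = 0 and Ω^{jk}T_{ij,kl} = 0 for all remaining free indices (summation over repeated indices). This space has complex dimension 14. -/

import Mathlib

namespace Stmt17Aux

abbrev V4 := Fin 4 → Fin 4 → Fin 4 → Fin 4 → ℂ
abbrev M4 := Fin 4 → Fin 4 → ℂ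

def up1 : Fin 6 → Fin 4 := ![0,0,0,1,1,2]
def up2 : Fin 6 → Fin 4 := ![1,2,3,2,3,3]
def pidx : Fin 4 → Fin 4 → Fin 6 := fun i j =>
  ![![0,0,1,2],![0,0,3,4],![1,3,0,5],![2,4,5,0]] i j
def sg : Fin 4 → Fin 4 → ℤ := fun i j => if i < j then 1 else if j < i then -1 else 0
def q1 : Fin 20 → Fin 6 := ![0,0,0,0,0,1,1,1,1,1,2,2,2,2,3,3,3,4,4,5]
def q2 : Fin 20 → Fin 6 := ![0,1,2,3,4,1,2,3,4,5,2,3,4,5,3,4,5,4,5,5]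

def vc : Fin 6 → Fin 6 → Fin 20 → ℤ := fun p q m =>
  if min p q = 0 ∧ max p q = 5 then (if m = 8 then 1 else 0) - (if m = 11 then 1 else 0)
  else if q1 m = min p q ∧ q2 m = max p q then 1 else 0

def coef : Fin 4 → Fin 4 → Fin 4 → Fin 4 → Fin 20 → ℤ := fun i j k l m =>
  sg i j * sg k l * vc (pidx i j) (pidx k l) m

theorem d1 : ∀ (i j k l : Fin 4) (m : Fin 20), coef j i k l m = - coef i j k l m := by decide
theorem d2 : ∀ (i j k l : Fin 4) (m : Fin 20), coef i j l k m = - coef i j k l m := by decide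
theorem d3 : ∀ (i j k l : Fin 4) (m : Fin 20),
    coef i j k l m + coef j k i l m + coef k i j l m = 0 := by decide
theorem dread : ∀ (m m' : Fin 20),
    coef (up1 (q1 m)) (up2 (q1 m)) (up1 (q2 m)) (up2 (q2 m)) m' = if m' = m then 1 else 0 := by
  decide
theorem dpl : ∀ (i j : Fin 4), i < j → up1 (pidx i j) = i ∧ up2 (pidx i j) = j := by decide

/-- The window-symmetry space (conditions not involving Ω). -/
noncomputable def W : Submodule ℂ V4 where
  carrier := {T | (∀ i j k l, T i j k l = -T j i k l) ∧ (∀ i j k l, T i j k l = -T i j l k) ∧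
      (∀ i j k l, T i j k l + T j k i l + T k i j l = 0)}
  add_mem' := by
    rintro T U ⟨a1,a2,a3⟩ ⟨b1,b2,b3⟩
    refine ⟨?_,?_,?_⟩ <;> intro i j k l <;> simp only [Pi.add_apply]
    · linear_combination a1 i j k l + b1 i j k l
    · linear_combination a2 i j k l + b2 i j k l
    · linear_combination a3 i j k l + b3 i j k l
  zero_mem' := by refine ⟨?_,?_,?_⟩ <;> intros <;> simp
  smul_mem' := by
    rintro c T ⟨a1,a2,a3⟩
    refine ⟨?_,?_,?_⟩ <;> intro i j k l <;> simp only [Pi.smul_apply, smul_eq_mul]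
    · linear_combination c * a1 i j k l
    · linear_combination c * a2 i j k l
    · linear_combination c * a3 i j k l

/-- Parametrization map. -/
noncomputable def Φ : (Fin 20 → ℂ) →ₗ[ℂ] V4 where
  toFun v := fun i j k l => ∑ m, (coef i j k l m : ℂ) * v m
  map_add' v w := by
    funext i j k l
    simp [mul_add, Finset.sum_add_distrib]
  map_smul' c v := by
    funext i j k l
    simp only [Pi.smul_apply, smul_eq_mul, RingHom.id_apply, Finset.mul_sum]
    exact Finset.sum_congr rfl fun m _ => by ring

theorem Φ_mem_W (v : Fin 20 → ℂ) : Φ v ∈ W := by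
  refine ⟨?_,?_,?_⟩ <;> intro i j k l <;>
    simp only [Φ, LinearMap.coe_mk, AddHom.coe_mk, ← Finset.sum_neg_distrib]
  · refine Finset.sum_congr rfl fun m _ => ?_
    rw [d1 i j k l m]; push_cast; ring
  · refine Finset.sum_congr rfl fun m _ => ?_
    rw [d2 i j k l m]; push_cast; ring
  · rw [← Finset.sum_add_distrib, ← Finset.sum_add_distrib]
    refine Finset.sum_eq_zero fun m _ => ?_
    have := d3 i j k l m
    have : ((coef i j k l m : ℂ)) + (coef j k i l m : ℂ) + (coef k i j l m : ℂ) = 0 := by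
      exact_mod_cast this
    linear_combination v m * this

theorem Φ_read (v : Fin 20 → ℂ) (m : Fin 20) :
    Φ v (up1 (q1 m)) (up2 (q1 m)) (up1 (q2 m)) (up2 (q2 m)) = v m := by
  simp only [Φ, LinearMap.coe_mk, AddHom.coe_mk]
  rw [Finset.sum_congr rfl (fun m' _ => by rw [dread m m'])]
  simp

/-- pair-exchange symmetry from the three window conditions -/
theorem hsym_of (T : V4) (h1 : ∀ i j k l, T i j k l = -T j i k l)
    (h2 : ∀ i j k l, T i j k l = -T i j l k)
    (h3 : ∀ i j k l, T i j k l + T j k i l + T k i j l = 0) :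
    ∀ a b c d, T a b c d = T c d a b := by
  intro a b c d
  linear_combination (h3 a b c d + h3 b c d a - h3 c d a b - h3 d a b c
    + h2 a b c d - h2 b c a d - h2 c d b a + h2 d a c b
    - h1 c a b d + h2 a c b d - h1 d b c a + h2 b d c a) / 2

set_option maxHeartbeats 2000000 in
theorem zero_of_read_zero (T : V4) (h1 : ∀ i j k l, T i j k l = -T j i k l)
    (h2 : ∀ i j k l, T i j k l = -T i j l k)
    (h3 : ∀ i j k l, T i j k l + T j k i l + T k i j l = 0)
    (hz : ∀ m : Fin 20, T (up1 (q1 m)) (up2 (q1 m)) (up1 (q2 m)) (up2 (q2 m)) = 0) :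
    T = 0 := by
  have hsym := hsym_of T h1 h2 h3
  have l05 : T 0 1 2 3 = 0 := by
    have e1 : T 1 2 0 3 = 0 := by rw [hsym]; exact hz 11
    have e2 : T 0 2 1 3 = 0 := hz 8
    linear_combination h3 0 1 2 3 - e1 - h1 2 0 1 3 + e2
  have hz36 : ∀ p q : Fin 6, T (up1 p) (up2 p) (up1 q) (up2 q) = 0 := by
    have z0 : T 0 1 0 1 = 0 := hz 0
    have z1 : T 0 1 0 2 = 0 := hz 1
    have z2 : T 0 1 0 3 = 0 := hz 2
    have z3 : T 0 1 1 2 = 0 := hz 3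
    have z4 : T 0 1 1 3 = 0 := hz 4
    have z5 : T 0 2 0 2 = 0 := hz 5
    have z6 : T 0 2 0 3 = 0 := hz 6
    have z7 : T 0 2 1 2 = 0 := hz 7
    have z8 : T 0 2 1 3 = 0 := hz 8
    have z9 : T 0 2 2 3 = 0 := hz 9
    have z10 : T 0 3 0 3 = 0 := hz 10
    have z11 : T 0 3 1 2 = 0 := hz 11
    have z12 : T 0 3 1 3 = 0 := hz 12
    have z13 : T 0 3 2 3 = 0 := hz 13
    have z14 : T 1 2 1 2 = 0 := hz 14
    have z15 : T 1 2 1 3 = 0 := hz 15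
    have z16 : T 1 2 2 3 = 0 := hz 16
    have z17 : T 1 3 1 3 = 0 := hz 17
    have z18 : T 1 3 2 3 = 0 := hz 18
    have z19 : T 2 3 2 3 = 0 := hz 19
    intro p q
    fin_cases p <;> fin_cases q <;>
      first | assumption | exact l05 | (rw [hsym]; first | assumption | exact l05)
  have main : ∀ i j k l : Fin 4, i < j → k < l → T i j k l = 0 := by
    intro i j k l hij hkl
    have hp := dpl i j hij
    have hq := dpl k l hkl
    have := hz36 (pidx i j) (pidx k l)
    rwa [hp.1, hp.2, hq.1, hq.2] at this
  have main2 : ∀ i j k l : Fin 4, i < j → T i j k l = 0 := by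
    intro i j k l hij
    rcases lt_trichotomy k l with hkl | rfl | hkl
    · exact main i j k l hij hkl
    · linear_combination (h2 i j k k) / 2
    · linear_combination h2 i j k l - main i j l k hij hkl
  funext i j k l
  show T i j k l = 0
  rcases lt_trichotomy i j with hij | rfl | hij
  · exact main2 i j k l hij
  · linear_combination (h1 i i k l) / 2
  · linear_combination h1 i j k l - main2 j i k l hij

theorem mem_W_eq_Φ (T : V4) (hT : T ∈ W) :
    T = Φ (fun m => T (up1 (q1 m)) (up2 (q1 m)) (up1 (q2 m)) (up2 (q2 m))) := by
  obtain ⟨h1, h2, h3⟩ := hT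
  set v : Fin 20 → ℂ := fun m => T (up1 (q1 m)) (up2 (q1 m)) (up1 (q2 m)) (up2 (q2 m)) with hv
  have hU : T - Φ v ∈ W := W.sub_mem ⟨h1,h2,h3⟩ (Φ_mem_W v)
  obtain ⟨g1, g2, g3⟩ := hU
  have := zero_of_read_zero (T - Φ v) g1 g2 g3 (fun m => by
    simp only [Pi.sub_apply, Φ_read v m]; simp only [hv]; ring)
  exact sub_eq_zero.mp this

theorem finrank_W : Module.finrank ℂ W = 20 := by
  have hinj : Function.Injective (Φ.codRestrict W Φ_mem_W) := by
    intro v w h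
    have h' : Φ v = Φ w := congrArg Subtype.val h
    funext m
    have := congrArg (fun T : V4 => T (up1 (q1 m)) (up2 (q1 m)) (up1 (q2 m)) (up2 (q2 m))) h'
    simpa only [Φ_read] using this
  have hsurj : Function.Surjective (Φ.codRestrict W Φ_mem_W) := by
    rintro ⟨T, hT⟩
    refine ⟨fun m => T (up1 (q1 m)) (up2 (q1 m)) (up1 (q2 m)) (up2 (q2 m)), ?_⟩
    ext1
    exact (mem_W_eq_Φ T hT).symm
  have e := LinearEquiv.ofBijective (Φ.codRestrict W Φ_mem_W) ⟨hinj, hsurj⟩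
  rw [← e.finrank_eq]
  simp


/-! ### Antisymmetric matrices -/

def c2 : Fin 4 → Fin 4 → Fin 6 → ℤ := fun k l m => sg k l * (if pidx k l = m then 1 else 0)

theorem e2read : ∀ (m m' : Fin 6), c2 (up1 m) (up2 m) m' = if m' = m then 1 else 0 := by decide

noncomputable def Alt : Submodule ℂ M4 where
  carrier := {A | ∀ k l, A k l = -A l k}
  add_mem' := by
    rintro A B hA hB k l; simp only [Pi.add_apply]; linear_combination hA k l + hB k l
  zero_mem' := by intro k l; simp
  smul_mem' := by
    rintro c A hA k l; simp only [Pi.smul_apply, smul_eq_mul]; linear_combination c * hA k l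

noncomputable def Ψ : (Fin 6 → ℂ) →ₗ[ℂ] M4 where
  toFun v := fun k l => ∑ m, (c2 k l m : ℂ) * v m
  map_add' v w := by funext k l; simp [mul_add, Finset.sum_add_distrib]
  map_smul' c v := by
    funext k l
    simp only [Pi.smul_apply, smul_eq_mul, RingHom.id_apply, Finset.mul_sum]
    exact Finset.sum_congr rfl fun m _ => by ring

theorem e2anti : ∀ (k l : Fin 4) (m : Fin 6), c2 l k m = - c2 k l m := by decide

theorem Ψ_mem_Alt (v : Fin 6 → ℂ) : Ψ v ∈ Alt := by
  intro k l
  simp only [Ψ, LinearMap.coe_mk, AddHom.coe_mk, ← Finset.sum_neg_distrib]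
  refine Finset.sum_congr rfl fun m _ => ?_
  rw [e2anti l k m]; push_cast; ring

theorem Ψ_read (v : Fin 6 → ℂ) (m : Fin 6) : Ψ v (up1 m) (up2 m) = v m := by
  simp only [Ψ, LinearMap.coe_mk, AddHom.coe_mk]
  rw [Finset.sum_congr rfl (fun m' _ => by rw [e2read m m'])]
  simp

theorem alt_zero (A : M4) (hA : ∀ k l, A k l = -A l k)
    (hz : ∀ m : Fin 6, A (up1 m) (up2 m) = 0) : A = 0 := by
  have main : ∀ k l : Fin 4, k < l → A k l = 0 := by
    intro k l hkl
    have hp := dpl k l hkl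
    have := hz (pidx k l)
    rwa [hp.1, hp.2] at this
  funext k l
  show A k l = 0
  rcases lt_trichotomy k l with h | rfl | h
  · exact main k l h
  · linear_combination (hA k k) / 2
  · linear_combination hA k l - main l k h

theorem mem_Alt_eq_Ψ (A : M4) (hA : A ∈ Alt) :
    A = Ψ (fun m => A (up1 m) (up2 m)) := by
  set v : Fin 6 → ℂ := fun m => A (up1 m) (up2 m) with hv
  have hU : A - Ψ v ∈ Alt := Alt.sub_mem hA (Ψ_mem_Alt v)
  have := alt_zero (A - Ψ v) hU (fun m => by
    simp only [Pi.sub_apply, Ψ_read v m]; simp only [hv]; ring)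
  exact sub_eq_zero.mp this

theorem finrank_Alt : Module.finrank ℂ Alt = 6 := by
  have hinj : Function.Injective (Ψ.codRestrict Alt Ψ_mem_Alt) := by
    intro v w h
    have h' : Ψ v = Ψ w := congrArg Subtype.val h
    funext m
    have := congrArg (fun A : M4 => A (up1 m) (up2 m)) h'
    simpa only [Ψ_read] using this
  have hsurj : Function.Surjective (Ψ.codRestrict Alt Ψ_mem_Alt) := by
    rintro ⟨A, hA⟩
    exact ⟨fun m => A (up1 m) (up2 m), by ext1; exact (mem_Alt_eq_Ψ A hA).symm⟩
  have e := LinearEquiv.ofBijective (Ψ.codRestrict Alt Ψ_mem_Alt) ⟨hinj, hsurj⟩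
  rw [← e.finrank_eq]
  simp

/-! ### The trace map -/

noncomputable def trL (Ω : M4) : V4 →ₗ[ℂ] M4 where
  toFun T := fun k l => ∑ i, ∑ j, Ω i j * T i j k l
  map_add' T U := by funext k l; simp [mul_add, Finset.sum_add_distrib]
  map_smul' c T := by
    funext k l
    simp only [Pi.smul_apply, smul_eq_mul, RingHom.id_apply, Finset.mul_sum]
    exact Finset.sum_congr rfl fun i _ => Finset.sum_congr rfl fun j _ => by ring


/-! ### Facts about the symplectic form -/

section Omega

variable {Ωup Ωlow : M4}
  (hΩanti : ∀ i j, Ωup i j = -Ωup j i)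
  (hΩinv : ∀ i k, ∑ j, Ωlow i j * Ωup j k = if i = k then 1 else 0)

include hΩanti hΩinv

theorem hul : ∀ i k, ∑ j, Ωup i j * Ωlow j k = if i = k then 1 else 0 := by
  have hml : (Matrix.of Ωlow) * (Matrix.of Ωup) = 1 := by
    ext i k
    simpa [Matrix.mul_apply, Matrix.one_apply] using hΩinv i k
  have hum : (Matrix.of Ωup) * (Matrix.of Ωlow) = 1 := mul_eq_one_comm.mp hml
  intro i k
  have := congrFun (congrFun hum i) k
  simpa [Matrix.mul_apply, Matrix.one_apply] using this

theorem hlanti : ∀ i j, Ωlow i j = -Ωlow j i := by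
  have hml : (Matrix.of Ωlow) * (Matrix.of Ωup) = 1 := by
    ext i k
    simpa [Matrix.mul_apply, Matrix.one_apply] using hΩinv i k
  have hum : (Matrix.of Ωup) * (Matrix.of Ωlow) = 1 := mul_eq_one_comm.mp hml
  have hN : (Matrix.of (fun i j => -Ωlow j i)) * (Matrix.of Ωup) = 1 := by
    ext i k
    have h := congrFun (congrFun hum k) i
    simp only [Matrix.mul_apply, Matrix.one_apply, Matrix.of_apply] at h ⊢
    rw [show (∑ j, -Ωlow j i * Ωup j k) = ∑ j, Ωup k j * Ωlow j i from
      Finset.sum_congr rfl fun j _ => by rw [hΩanti k j]; ring, h]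
    rcases eq_or_ne i k with rfl | hne
    · simp
    · simp [hne, Ne.symm hne]
  have hNM : Matrix.of (fun i j => -Ωlow j i) = Matrix.of Ωlow := by
    calc Matrix.of (fun i j => -Ωlow j i)
        = Matrix.of (fun i j => -Ωlow j i) * ((Matrix.of Ωup) * (Matrix.of Ωlow)) := by
          rw [hum, mul_one]
      _ = Matrix.of Ωlow := by rw [← Matrix.mul_assoc, hN, one_mul]
  intro i j
  have := congrFun (congrFun hNM i) j
  simpa using this.symm

theorem c4 : ∑ i, ∑ j, Ωup i j * Ωlow i j = -4 := by
  have step : ∀ i : Fin 4, ∑ j, Ωup i j * Ωlow i j = -1 := by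
    intro i
    have h := hΩinv i i
    simp only [if_pos rfl] at h
    calc ∑ j, Ωup i j * Ωlow i j = ∑ j, -(Ωlow i j * Ωup j i) := by
          refine Finset.sum_congr rfl fun j _ => ?_
          rw [hΩanti i j]; ring
      _ = -1 := by rw [Finset.sum_neg_distrib, h]; norm_num
  rw [Finset.sum_congr rfl fun i _ => step i]
  norm_num [Finset.sum_const]

theorem l3 : ∀ j k, ∑ i, Ωup i j * Ωlow i k = -(if k = j then 1 else 0) := by
  intro j k
  have h := hΩinv k j
  calc ∑ i, Ωup i j * Ωlow i k = ∑ i, -(Ωlow k i * Ωup i j) := by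
        refine Finset.sum_congr rfl fun i _ => ?_
        rw [hlanti hΩanti hΩinv i k]; ring
    _ = -(if k = j then 1 else 0) := by rw [Finset.sum_neg_distrib, h]

/-! ### The Kulkarni–Nomizu-type construction -/

end Omega

def KN (Ω A : M4) : V4 := fun i j k l =>
  2*Ω i j*A k l + 2*Ω k l*A i j + Ω i k*A j l - Ω j k*A i l - Ω i l*A j k + Ω j l*A i k

theorem KN_mem_W (Ω A : M4) (hΩ : ∀ x y, Ω x y = -Ω y x) (hA : ∀ x y, A x y = -A y x) :
    KN Ω A ∈ W := by
  refine ⟨?_, ?_, ?_⟩ <;> intro i j k l <;> simp only [KN]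
  · linear_combination 2*A k l*(hΩ i j) + 2*Ω k l*(hA i j) + A j l * hΩ i i - A j l * hΩ i i
  · linear_combination 2*Ω i j*(hA k l) + 2*A i j*(hΩ k l)
  · linear_combination A k l*(hΩ i j) + Ω k l*(hA i j) + A j l*(hΩ i k)
      + A i l*(hΩ j k) + Ω i l*(hA j k) + Ω j l*(hA i k)

section Trace

variable {Ωup Ωlow : M4}
  (hΩanti : ∀ i j, Ωup i j = -Ωup j i)
  (hΩinv : ∀ i k, ∑ j, Ωlow i j * Ωup j k = if i = k then 1 else 0)

include hΩanti hΩinv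

theorem tr_KN (A : M4) (hA : ∀ x y, A x y = -A y x) (k l : Fin 4) :
    ∑ i, ∑ j, Ωup i j * KN Ωlow A i j k l
      = -12 * A k l + 2 * (∑ i, ∑ j, Ωup i j * A i j) * Ωlow k l := by
  have hlan := hlanti hΩanti hΩinv
  have hu := hul hΩanti hΩinv
  have h3 := l3 hΩanti hΩinv
  have split : ∑ i, ∑ j, Ωup i j * KN Ωlow A i j k l
      = (2 * A k l) * (∑ i, ∑ j, Ωup i j * Ωlow i j)
        + (2 * Ωlow k l) * (∑ i, ∑ j, Ωup i j * A i j)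
        + (∑ i, ∑ j, (Ωup i j * Ωlow i k) * A j l)
        - (∑ i, ∑ j, (Ωup i j * Ωlow j k) * A i l)
        - (∑ i, ∑ j, (Ωup i j * Ωlow i l) * A j k)
        + (∑ i, ∑ j, (Ωup i j * Ωlow j l) * A i k) := by
    simp only [KN, Finset.mul_sum, ← Finset.sum_add_distrib, ← Finset.sum_sub_distrib]
    exact Finset.sum_congr rfl fun i _ => Finset.sum_congr rfl fun j _ => by ring
  have P3 : (∑ i, ∑ j, (Ωup i j * Ωlow i k) * A j l) = -A k l := by
    rw [Finset.sum_comm]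
    calc ∑ j, ∑ i, (Ωup i j * Ωlow i k) * A j l
        = ∑ j, (∑ i, Ωup i j * Ωlow i k) * A j l := by
          exact Finset.sum_congr rfl fun j _ => (Finset.sum_mul _ _ _).symm
      _ = ∑ j, (-(if k = j then 1 else 0)) * A j l := by
          exact Finset.sum_congr rfl fun j _ => by rw [h3 j k]
      _ = -A k l := by simp [ite_mul, Finset.sum_ite_eq]
  have P5 : (∑ i, ∑ j, (Ωup i j * Ωlow i l) * A j k) = -A l k := by
    rw [Finset.sum_comm]
    calc ∑ j, ∑ i, (Ωup i j * Ωlow i l) * A j k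
        = ∑ j, (∑ i, Ωup i j * Ωlow i l) * A j k := by
          exact Finset.sum_congr rfl fun j _ => (Finset.sum_mul _ _ _).symm
      _ = ∑ j, (-(if l = j then 1 else 0)) * A j k := by
          exact Finset.sum_congr rfl fun j _ => by rw [h3 j l]
      _ = -A l k := by simp [ite_mul, Finset.sum_ite_eq]
  have P4 : (∑ i, ∑ j, (Ωup i j * Ωlow j k) * A i l) = A k l := by
    calc ∑ i, ∑ j, (Ωup i j * Ωlow j k) * A i l
        = ∑ i, (∑ j, Ωup i j * Ωlow j k) * A i l := by
          exact Finset.sum_congr rfl fun i _ => (Finset.sum_mul _ _ _).symm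
      _ = ∑ i, (if i = k then 1 else 0) * A i l := by
          exact Finset.sum_congr rfl fun i _ => by rw [hu i k]
      _ = A k l := by simp [ite_mul, Finset.sum_ite_eq']
  have P6 : (∑ i, ∑ j, (Ωup i j * Ωlow j l) * A i k) = A l k := by
    calc ∑ i, ∑ j, (Ωup i j * Ωlow j l) * A i k
        = ∑ i, (∑ j, Ωup i j * Ωlow j l) * A i k := by
          exact Finset.sum_congr rfl fun i _ => (Finset.sum_mul _ _ _).symm
      _ = ∑ i, (if i = l then 1 else 0) * A i k := by
          exact Finset.sum_congr rfl fun i _ => by rw [hu i l]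
      _ = A l k := by simp [ite_mul, Finset.sum_ite_eq']
  rw [split, P3, P4, P5, P6, c4 hΩanti hΩinv]
  linear_combination (2 : ℂ) * hA l k

end Trace


theorem cond5 {Ωup : M4} (hΩanti : ∀ i j, Ωup i j = -Ωup j i) (T : V4)
    (h1 : ∀ i j k l, T i j k l = -T j i k l)
    (h3 : ∀ i j k l, T i j k l + T j k i l + T k i j l = 0)
    (h4 : ∀ k l, ∑ i, ∑ j, Ωup i j * T i j k l = 0) :
    ∀ i l, ∑ j, ∑ k, Ωup j k * T i j k l = 0 := by
  intro i l
  have hC : (∑ j, ∑ k, Ωup j k * T k i j l) = ∑ j, ∑ k, Ωup j k * T i j k l := by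
    conv_lhs => rw [Finset.sum_comm]
    refine Finset.sum_congr rfl fun a _ => Finset.sum_congr rfl fun b _ => ?_
    linear_combination (T a i b l) * (hΩanti b a) - (Ωup a b) * (h1 a i b l)
  have key : (∑ j, ∑ k, Ωup j k * T i j k l)
      = -(∑ j, ∑ k, Ωup j k * T j k i l) - (∑ j, ∑ k, Ωup j k * T k i j l) := by
    have e : ∀ j k : Fin 4, Ωup j k * T i j k l
        = -(Ωup j k * T j k i l) - Ωup j k * T k i j l :=
      fun j k => by linear_combination (Ωup j k) * h3 i j k l
    calc ∑ j, ∑ k, Ωup j k * T i j k l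
        = ∑ j, ∑ k, (-(Ωup j k * T j k i l) - Ωup j k * T k i j l) :=
          Finset.sum_congr rfl fun j _ => Finset.sum_congr rfl fun k _ => e j k
      _ = -(∑ j, ∑ k, Ωup j k * T j k i l) - (∑ j, ∑ k, Ωup j k * T k i j l) := by
          simp [Finset.sum_sub_distrib, Finset.sum_neg_distrib]
  rw [h4 i l, hC] at key
  linear_combination key / 2

end Stmt17Aux

set_option synthInstance.maxHeartbeats 1000000 in
set_option maxHeartbeats 1000000 in
open Stmt17Aux in
/-- The irreducible Sp(4,ℂ)-representation of traceless window-shape curvature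
tensors on `ℂ⁴` has complex dimension 14. -/
theorem stmt17 (Ωup Ωlow : Fin 4 → Fin 4 → ℂ)
    (hΩanti : ∀ i j, Ωup i j = -Ωup j i)
    (hΩinv : ∀ i k, ∑ j, Ωlow i j * Ωup j k = if i = k then 1 else 0)
    (S : Submodule ℂ (Fin 4 → Fin 4 → Fin 4 → Fin 4 → ℂ))
    (hS : ∀ T, T ∈ S ↔
      ((∀ i j k l, T i j k l = -T j i k l) ∧
       (∀ i j k l, T i j k l = -T i j l k) ∧
       (∀ i j k l, T i j k l + T j k i l + T k i j l = 0) ∧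
       (∀ k l, ∑ i, ∑ j, Ωup i j * T i j k l = 0) ∧
       (∀ i l, ∑ j, ∑ k, Ωup j k * T i j k l = 0))) :
    Module.finrank ℂ S = 14 := by
  classical
  have hlan := hlanti hΩanti hΩinv
  have hkereq : ∀ T : V4, T ∈ S ↔ T ∈ W ∧ trL Ωup T = 0 := by
    intro T
    rw [hS]
    constructor
    · rintro ⟨a1, a2, a3, a4, _⟩
      exact ⟨⟨a1, a2, a3⟩, funext fun k => funext fun l => a4 k l⟩
    · rintro ⟨⟨a1, a2, a3⟩, htr⟩
      have a4 : ∀ k l, ∑ i, ∑ j, Ωup i j * T i j k l = 0 := fun k l =>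
        congrFun (congrFun htr k) l
      exact ⟨a1, a2, a3, a4, cond5 hΩanti T a1 a3 a4⟩
  set f : W →ₗ[ℂ] M4 := (trL Ωup).domRestrict W with hf
  have hker : LinearMap.ker f = S.comap W.subtype := by
    ext x
    obtain ⟨T, hT⟩ := x
    simp only [LinearMap.mem_ker, Submodule.mem_comap, hf, LinearMap.domRestrict_apply]
    constructor
    · intro h
      exact (hkereq T).mpr ⟨hT, h⟩
    · intro h
      exact ((hkereq T).mp h).2
  have hrange : LinearMap.range f = Alt := by
    apply le_antisymm
    · rintro B ⟨⟨T, hT⟩, rfl⟩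
      obtain ⟨a1, a2, a3⟩ := hT
      intro k l
      show (∑ i, ∑ j, Ωup i j * T i j k l) = -(∑ i, ∑ j, Ωup i j * T i j l k)
      calc ∑ i, ∑ j, Ωup i j * T i j k l
          = ∑ i, ∑ j, -(Ωup i j * T i j l k) :=
            Finset.sum_congr rfl fun i _ => Finset.sum_congr rfl fun j _ => by
              linear_combination (Ωup i j) * a2 i j k l
        _ = -(∑ i, ∑ j, Ωup i j * T i j l k) := by
            simp [Finset.sum_neg_distrib]
    · intro B hB
      have hBanti : ∀ k l : Fin 4, B k l = -B l k := hB
      set sB : ℂ := ∑ i, ∑ j, Ωup i j * B i j with hsB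
      set A : M4 := fun k l => (-1/12) * B k l + (-sB/120) * Ωlow k l with hA
      have hAanti : ∀ x y, A x y = -A y x := fun x y => by
        simp only [hA]
        linear_combination (-1/12 : ℂ) * hBanti x y + (-sB/120) * (hlan x y)
      have hKN := KN_mem_W Ωlow A hlan hAanti
      refine ⟨⟨KN Ωlow A, hKN⟩, ?_⟩
      funext k l
      show ∑ i, ∑ j, Ωup i j * KN Ωlow A i j k l = B k l
      rw [tr_KN hΩanti hΩinv A hAanti k l]
      have hsA : (∑ i, ∑ j, Ωup i j * A i j) = -sB/20 := by
        have expand : ∀ i j : Fin 4, Ωup i j * A i j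
            = (-1/12) * (Ωup i j * B i j) + (-sB/120) * (Ωup i j * Ωlow i j) := fun i j => by
          simp only [hA]; ring
        calc ∑ i, ∑ j, Ωup i j * A i j
            = ∑ i, ∑ j, ((-1/12) * (Ωup i j * B i j) + (-sB/120) * (Ωup i j * Ωlow i j)) :=
              Finset.sum_congr rfl fun i _ => Finset.sum_congr rfl fun j _ => expand i j
          _ = (-1/12) * (∑ i, ∑ j, Ωup i j * B i j)
              + (-sB/120) * (∑ i, ∑ j, Ωup i j * Ωlow i j) := by
              simp [Finset.sum_add_distrib, Finset.mul_sum]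
          _ = -sB/20 := by rw [c4 hΩanti hΩinv, ← hsB]; ring
      rw [hsA]
      simp only [hA]
      ring
  have hSle : S ≤ W := fun T hT => ((hkereq T).mp hT).1
  have hrn := LinearMap.finrank_range_add_finrank_ker f
  have e2 : (S.comap (W : Submodule ℂ V4).subtype) ≃ₗ[ℂ] S :=
    Submodule.comapSubtypeEquivOfLe hSle
  rw [hrange, hker, finrank_Alt, e2.finrank_eq, finrank_W] at hrn
  omega
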